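/- Let p be a prime, n a positive integer, and G a finite abelian p-group of order p^n. Then ψ(Z_p^n) ≤ ψ(G), i.e. among all abelian groups of order p^n, the elementary abelian group Z_p^n attains the minimum value of ψ; moreover equality holds if and only if G is isomorphic to Z_p^n. -/

import Mathlib

/-- `psi G` is the sum of the orders of all elements of the finite group `G`. -/
noncomputable def psi (G : Type*) [Monoid G] [Fintype G] : ℕ := ∑ a : G, orderOf a

lemma psi_congr {G H : Type*} [Monoid G] [Fintype G] [Monoid H] [Fintype H]
    (e : G ≃* H) : psi G = psi H := by
  unfold psi
  rw [← Equiv.sum_comp e.toEquiv (fun h => orderOf h)]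
  exact Finset.sum_congr rfl fun x _ =>
    (orderOf_injective e.toMonoidHom e.injective x).symm

section lower

variable {G : Type*} [Group G] [Fintype G] {p n : ℕ} [Fact p.Prime]

lemma p_le_orderOf (hG : Fintype.card G = p ^ n) {x : G} (hx : x ≠ 1) :
    p ≤ orderOf x := by
  have hd : orderOf x ∣ p ^ n := hG ▸ orderOf_dvd_card
  obtain ⟨k, hk, hxk⟩ := (Nat.dvd_prime_pow (Fact.out : p.Prime)).mp hd
  have hk0 : k ≠ 0 := by
    rintro rfl
    simp at hxk
    exact hx hxk
  calc p = p ^ 1 := (pow_one p).symm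
    _ ≤ p ^ k := Nat.pow_le_pow_right (Fact.out : p.Prime).pos (Nat.one_le_iff_ne_zero.mpr hk0)
    _ = orderOf x := hxk.symm

lemma psi_split [DecidableEq G] (hG : Fintype.card G = p ^ n) :
    psi G = 1 + ∑ x ∈ Finset.univ.erase (1 : G), orderOf x := by
  unfold psi
  rw [← Finset.add_sum_erase Finset.univ _ (Finset.mem_univ (1 : G)), orderOf_one]

lemma psi_lower (hG : Fintype.card G = p ^ n) :
    1 + (p ^ n - 1) * p ≤ psi G := by
  classical
  rw [psi_split hG]
  have h1 : ((Finset.univ.erase (1 : G)).card) = p ^ n - 1 := by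
    rw [Finset.card_erase_of_mem (Finset.mem_univ _), Finset.card_univ, hG]
  have : ∑ x ∈ Finset.univ.erase (1 : G), p ≤ ∑ x ∈ Finset.univ.erase (1 : G), orderOf x :=
    Finset.sum_le_sum fun x hx => p_le_orderOf hG (Finset.ne_of_mem_erase hx)
  rw [Finset.sum_const, h1, smul_eq_mul] at this
  omega

lemma psi_eq_iff (hG : Fintype.card G = p ^ n) :
    psi G = 1 + (p ^ n - 1) * p ↔ ∀ x : G, x ^ p = 1 := by
  classical
  have h1 : ((Finset.univ.erase (1 : G)).card) = p ^ n - 1 := by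
    rw [Finset.card_erase_of_mem (Finset.mem_univ _), Finset.card_univ, hG]
  have key : psi G = 1 + (p ^ n - 1) * p ↔
      ∀ x ∈ Finset.univ.erase (1 : G), orderOf x = p := by
    rw [psi_split hG]
    have hconst : (p ^ n - 1) * p = ∑ _x ∈ Finset.univ.erase (1 : G), p := by
      rw [Finset.sum_const, h1, smul_eq_mul]
    rw [hconst]
    constructor
    · intro h
      have h2 : ∑ x ∈ Finset.univ.erase (1 : G), p
          = ∑ x ∈ Finset.univ.erase (1 : G), orderOf x := by omega
      have := (Finset.sum_eq_sum_iff_of_le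
        (fun x hx => p_le_orderOf hG (Finset.ne_of_mem_erase hx))).mp h2
      exact fun x hx => (this x hx).symm
    · intro h
      rw [Finset.sum_congr rfl h]
  rw [key]
  constructor
  · intro h x
    by_cases hx : x = 1
    · simp [hx]
    · have := h x (Finset.mem_erase.mpr ⟨hx, Finset.mem_univ x⟩)
      rw [← this]; exact pow_orderOf_eq_one x
  · intro h x hx
    have hd : orderOf x ∣ p := orderOf_dvd_of_pow_eq_one (h x)
    rcases (Nat.dvd_prime (Fact.out : p.Prime)).mp hd with h1 | h1
    · exact absurd (orderOf_eq_one_iff.mp h1) (Finset.ne_of_mem_erase hx)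
    · exact h1

end lower

lemma card_pi_zmod (p n : ℕ) [Fact p.Prime] :
    Fintype.card (Fin n → Multiplicative (ZMod p)) = p ^ n := by
  haveI : NeZero p := ⟨(Fact.out : p.Prime).ne_zero⟩
  simp [ZMod.card]

lemma pow_p_eq_one_pi (p n : ℕ) [Fact p.Prime] (x : Fin n → Multiplicative (ZMod p)) :
    x ^ p = 1 := by
  haveI : NeZero p := ⟨(Fact.out : p.Prime).ne_zero⟩
  funext i
  show (x i) ^ p = 1
  have : (Multiplicative.toAdd (x i ^ p)) = p • Multiplicative.toAdd (x i) := by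
    simp
  have h2 : p • Multiplicative.toAdd (x i) = 0 := by
    rw [nsmul_eq_mul, ZMod.natCast_self, zero_mul]
  apply Multiplicative.toAdd.injective
  rw [this, h2]; rfl

/-- A finite abelian group of exponent dividing `p` and order `p ^ n` is
elementary abelian. -/
lemma iso_of_exponent_p (p n : ℕ) [Fact p.Prime]
    (G : Type*) [CommGroup G] [Fintype G] (hG : Fintype.card G = p ^ n)
    (h : ∀ x : G, x ^ p = 1) : Nonempty (G ≃* (Fin n → Multiplicative (ZMod p))) := by
  have hp1 : 1 ≤ p := (Fact.out : p.Prime).one_lt.le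
  obtain ⟨q, rfl⟩ : ∃ q, p = q + 1 := ⟨p - 1, by omega⟩
  haveI : NeZero (q + 1) := ⟨Nat.succ_ne_zero q⟩
  letI : Module (ZMod (q + 1)) (Additive G) := AddCommGroup.zmodModule (by
    intro x
    show Additive.ofMul (Additive.toMul x ^ (q + 1)) = 0
    rw [h (Additive.toMul x)]; rfl)
  haveI : Module.Finite (ZMod (q + 1)) (Additive G) := Module.Finite.of_finite
  have hG' : Fintype.card (Additive G) = (q + 1) ^ n :=
    (Fintype.card_congr Additive.toMul).trans hG
  have hcard : Fintype.card (Additive G)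
      = (q + 1) ^ Module.finrank (ZMod (q + 1)) (Additive G) := by
    have := Module.card_eq_pow_finrank (K := ZMod (q + 1)) (V := Additive G)
    rwa [ZMod.card] at this
  have hfr : Module.finrank (ZMod (q + 1)) (Additive G) = n := by
    have : (q + 1) ^ Module.finrank (ZMod (q + 1)) (Additive G) = (q + 1) ^ n := by
      rw [← hcard]; exact hG'
    exact Nat.pow_right_injective (Fact.out : (q + 1).Prime).two_le this
  have b : Module.Basis (Fin n) (ZMod (q + 1)) (Additive G) :=
    Module.finBasisOfFinrankEq _ _ hfr
  let e : Additive G ≃+ (Fin n → ZMod (q + 1)) := b.equivFun.toAddEquiv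
  exact ⟨((MulEquiv.multiplicativeAdditive G).symm.trans
    (AddEquiv.toMultiplicative e)).trans
      (MulEquiv.piMultiplicative (fun _ : Fin n => ZMod (q + 1)))⟩

theorem psi_min_elementary_abelian (p n : ℕ) [Fact p.Prime] (hn : 0 < n)
    (G : Type*) [CommGroup G] [Fintype G] (hG : Fintype.card G = p ^ n) :
    psi (Fin n → Multiplicative (ZMod p)) ≤ psi G ∧
      (psi (Fin n → Multiplicative (ZMod p)) = psi G ↔
        Nonempty (G ≃* (Fin n → Multiplicative (ZMod p)))) := by
  have hK := card_pi_zmod p n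
  have hpsiK : psi (Fin n → Multiplicative (ZMod p)) = 1 + (p ^ n - 1) * p :=
    (psi_eq_iff hK).mpr (pow_p_eq_one_pi p n)
  have hlow := psi_lower hG
  constructor
  · omega
  · constructor
    · intro h
      have hGeq : psi G = 1 + (p ^ n - 1) * p := by omega
      exact iso_of_exponent_p p n G hG ((psi_eq_iff hG).mp hGeq)
    · rintro ⟨e⟩
      exact (psi_congr e).symm
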